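/- For each integer n ≥ 10, the polynomial N_n(X) = X^{n-2}(X³ − X − 1) + (X³ + X² − 1) has exactly one real root s_n greater than 1, and for each integer m ≥ 4, the polynomial Q_m(X) = X^{m-3}(X³ − X − 1) − (X³ + X² − 1) has exactly one real root s'_m greater than 1. The sequence (s_n)_{n≥10} is strictly increasing, the sequence (s'_m)_{m≥4} is strictly decreasing, and both sequences converge to the unique real root θ ≈ 1.3247 of X³ − X − 1 (the smallest Pisot number). -/

import Mathlib

open Polynomial Filter
open Set

/-- For `n ≥ 3`, define `N_n(X) = X ^ (n - 2) * (X ^ 3 - X - 1) + (X ^ 3 + X ^ 2 - 1) ∈ ℤ[X]`. -/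
noncomputable def Nn (n : ℕ) : Polynomial ℤ :=
  X ^ (n - 2) * (X ^ 3 - X - 1) + (X ^ 3 + X ^ 2 - 1)

/-- For `m ≥ 4`, define `Q_m(X) = X ^ (m - 3) * (X ^ 3 - X - 1) - (X ^ 3 + X ^ 2 - 1) ∈ ℤ[X]`. -/
noncomputable def Qm (m : ℕ) : Polynomial ℤ :=
  X ^ (m - 3) * (X ^ 3 - X - 1) - (X ^ 3 + X ^ 2 - 1)

noncomputable section SalemAux

/-- `f(x) = x^3 - x - 1` as a real function. -/
def sfr (x : ℝ) : ℝ := x ^ 3 - x - 1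

/-- `g(x) = x^3 + x^2 - 1` as a real function. -/
def sgr (x : ℝ) : ℝ := x ^ 3 + x ^ 2 - 1

lemma sfr_lt_sfr {x y : ℝ} (hx : 1 ≤ x) (hxy : x < y) : sfr x < sfr y := by
  unfold sfr
  have h1 : 0 < y - x := sub_pos.2 hxy
  have h2 : 0 ≤ x * y - 1 := by nlinarith
  nlinarith [mul_nonneg h1.le h2, mul_pos h1 (mul_pos (lt_of_lt_of_le one_pos hx) (lt_of_lt_of_le one_pos hx))]

lemma sgr_pos {x : ℝ} (hx : 1 ≤ x) : 0 < sgr x := by unfold sgr; nlinarith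

lemma continuous_sfr : Continuous sfr := by unfold sfr; fun_prop

lemma ex_th : ∃ t : ℝ, t ∈ Set.Ioo (1.32 : ℝ) 1.33 ∧ sfr t = 0 := by
  have h : Set.Ioo (sfr 1.32) (sfr 1.33) ⊆ sfr '' Set.Ioo 1.32 1.33 :=
    intermediate_value_Ioo (by norm_num) continuous_sfr.continuousOn
  have h0 : (0 : ℝ) ∈ Set.Ioo (sfr 1.32) (sfr 1.33) := by
    constructor <;> (unfold sfr; norm_num)
  obtain ⟨t, ht, ht0⟩ := h h0
  exact ⟨t, ht, ht0⟩

/-- The smallest Pisot number, real root of `x^3 - x - 1`. -/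
def th : ℝ := ex_th.choose

lemma th_mem : th ∈ Set.Ioo (1.32 : ℝ) 1.33 := ex_th.choose_spec.1

lemma sfr_th : sfr th = 0 := ex_th.choose_spec.2

lemma th_gt : (1.32 : ℝ) < th := th_mem.1
lemma th_lt : th < (1.33 : ℝ) := th_mem.2
lemma one_lt_th : (1 : ℝ) < th := lt_trans (by norm_num) th_gt

lemma sfr_neg {x : ℝ} (hx : 1 ≤ x) (hxth : x < th) : sfr x < 0 := by
  have := sfr_lt_sfr hx hxth; rw [sfr_th] at this; linarith

lemma sfr_pos {x : ℝ} (hx : th < x) : 0 < sfr x := by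
  have := sfr_lt_sfr (le_of_lt one_lt_th) hx; rw [sfr_th] at this; linarith

lemma th_unique (x : ℝ) (hx : sfr x = 0) : x = th := by
  have h1 : th ^ 3 - th - 1 = 0 := sfr_th
  have hx' : x ^ 3 - x - 1 = 0 := hx
  have key : (x - th) * (x ^ 2 + x * th + th ^ 2 - 1) = 0 := by
    linear_combination hx' - h1
  have hpos : 0 < x ^ 2 + x * th + th ^ 2 - 1 := by
    nlinarith [sq_nonneg (2 * x + th), th_gt]
  rcases mul_eq_zero.1 key with h | h
  · linarith [sub_eq_zero.1 h]
  · linarith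

end SalemAux

noncomputable section SalemCalc

/-- `nf(x) = 1 + x - x^3 = -f(x)`. -/
def snf (x : ℝ) : ℝ := 1 + x - x ^ 3

def snum (x : ℝ) : ℝ := x ^ 5 + 2 * x ^ 4 + x ^ 3 + 2 * x ^ 2 + x

def sden (x : ℝ) : ℝ := snf x * sgr x

def rho (x : ℝ) : ℝ := snum x / sden x

def sC (x : ℝ) : ℝ :=
  x ^ 9 + 5 * x ^ 8 + 11 * x ^ 7 + 27 * x ^ 6 + 46 * x ^ 5 + 46 * x ^ 4 + 27 * x ^ 3 +
    11 * x ^ 2 + 5 * x + 1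

def sG (x : ℝ) : ℝ := sgr x / snf x

def uu (x : ℝ) : ℝ := rho x * Real.log x - Real.log (sG x)

lemma snf_pos {x : ℝ} (hx : 1 ≤ x) (hxth : x < th) : 0 < snf x := by
  have h := sfr_neg hx hxth; unfold sfr at h; unfold snf; linarith

lemma sden_pos {x : ℝ} (hx : 1 ≤ x) (hxth : x < th) : 0 < sden x :=
  mul_pos (snf_pos hx hxth) (sgr_pos hx)

lemma sC_pos {x : ℝ} (hx : 0 < x) : 0 < sC x := by unfold sC; positivity

lemma sG_pos {x : ℝ} (hx : 1 ≤ x) (hxth : x < th) : 0 < sG x :=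
  div_pos (sgr_pos hx) (snf_pos hx hxth)

lemma hasDerivAt_pow2 (x : ℝ) : HasDerivAt (fun x : ℝ => x ^ 2) (2 * x) x := by
  simpa using hasDerivAt_pow 2 x

lemma hasDerivAt_pow3 (x : ℝ) : HasDerivAt (fun x : ℝ => x ^ 3) (3 * x ^ 2) x := by
  simpa using hasDerivAt_pow 3 x

lemma hasDerivAt_snum (x : ℝ) :
    HasDerivAt snum (5 * x ^ 4 + 8 * x ^ 3 + 3 * x ^ 2 + 4 * x + 1) x := by
  have h5 : HasDerivAt (fun x : ℝ => x ^ 5) (5 * x ^ 4) x := by simpa using hasDerivAt_pow 5 x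
  have h4 : HasDerivAt (fun x : ℝ => 2 * x ^ 4) (2 * (4 * x ^ 3)) x :=
    (by simpa using hasDerivAt_pow 4 x : HasDerivAt (fun x : ℝ => x ^ 4) (4 * x ^ 3) x).const_mul 2
  have h2 : HasDerivAt (fun x : ℝ => 2 * x ^ 2) (2 * (2 * x)) x := (hasDerivAt_pow2 x).const_mul 2
  have h := (((h5.add h4).add (hasDerivAt_pow3 x)).add h2).add (hasDerivAt_id x)
  exact h.congr_deriv (by ring)

lemma hasDerivAt_snf (x : ℝ) : HasDerivAt snf (1 - 3 * x ^ 2) x := by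
  have h := ((hasDerivAt_const x (1 : ℝ)).add (hasDerivAt_id x)).sub (hasDerivAt_pow3 x)
  exact h.congr_deriv (by ring)

lemma hasDerivAt_sgr (x : ℝ) : HasDerivAt sgr (3 * x ^ 2 + 2 * x) x := by
  have h := ((hasDerivAt_pow3 x).add (hasDerivAt_pow2 x)).sub (hasDerivAt_const x (1 : ℝ))
  exact h.congr_deriv (by ring)

lemma hasDerivAt_sden (x : ℝ) :
    HasDerivAt sden ((1 - 3 * x ^ 2) * sgr x + snf x * (3 * x ^ 2 + 2 * x)) x :=
  (hasDerivAt_snf x).mul (hasDerivAt_sgr x)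

lemma hasDerivAt_rho {x : ℝ} (hd : sden x ≠ 0) :
    HasDerivAt rho ((x - 1) * sC x / (sden x) ^ 2) x := by
  have h := (hasDerivAt_snum x).div (hasDerivAt_sden x) hd
  refine h.congr_deriv ?_
  congr 1
  unfold snum sden snf sgr sC
  ring

lemma hasDerivAt_log_sG {x : ℝ} (hx1 : 1 ≤ x) (hxth : x < th) :
    HasDerivAt (fun t => Real.log (sG t)) (rho x / x) x := by
  have hnf := snf_pos hx1 hxth
  have hgr := sgr_pos hx1
  have hx0 : (0 : ℝ) < x := lt_of_lt_of_le one_pos hx1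
  have hG : HasDerivAt sG
      (((3 * x ^ 2 + 2 * x) * snf x - sgr x * (1 - 3 * x ^ 2)) / (snf x) ^ 2) x :=
    (hasDerivAt_sgr x).div (hasDerivAt_snf x) hnf.ne'
  have h := hG.log (sG_pos hx1 hxth).ne'
  convert h using 1
  have h1 : snf x ≠ 0 := hnf.ne'
  have h2 : sgr x ≠ 0 := hgr.ne'
  unfold rho snum sden sG at *
  unfold snf sgr at *
  field_simp
  ring

lemma hasDerivAt_uu {x : ℝ} (hx1 : 1 ≤ x) (hxth : x < th) :
    HasDerivAt uu ((x - 1) * sC x / (sden x) ^ 2 * Real.log x) x := by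
  have hx0 : (0 : ℝ) < x := lt_of_lt_of_le one_pos hx1
  have hd : sden x ≠ 0 := (sden_pos hx1 hxth).ne'
  have h1 := (hasDerivAt_rho hd).mul (Real.hasDerivAt_log hx0.ne')
  have h := h1.sub (hasDerivAt_log_sG hx1 hxth)
  refine h.congr_deriv ?_
  rw [div_eq_mul_inv (rho x)]
  ring

lemma rho_strictMono : StrictMonoOn rho (Set.Ico 1 th) := by
  apply strictMonoOn_of_deriv_pos (convex_Ico 1 th)
  · intro x hx
    exact (hasDerivAt_rho (sden_pos hx.1 hx.2).ne').continuousAt.continuousWithinAt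
  · rw [interior_Ico]
    intro x hx
    rw [(hasDerivAt_rho (sden_pos hx.1.le hx.2).ne').deriv]
    have hC := sC_pos (lt_trans one_pos hx.1)
    have hden := sden_pos hx.1.le hx.2
    have hx1 : (0 : ℝ) < x - 1 := sub_pos.2 hx.1
    positivity

lemma uu_strictMono : StrictMonoOn uu (Set.Ico 1 th) := by
  apply strictMonoOn_of_deriv_pos (convex_Ico 1 th)
  · intro x hx
    exact (hasDerivAt_uu hx.1 hx.2).continuousAt.continuousWithinAt
  · rw [interior_Ico]
    intro x hx
    rw [(hasDerivAt_uu hx.1.le hx.2).deriv]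
    have hC := sC_pos (lt_trans one_pos hx.1)
    have hden := sden_pos hx.1.le hx.2
    have hx1 : (0 : ℝ) < x - 1 := sub_pos.2 hx.1
    have hlog := Real.log_pos hx.1
    positivity

lemma uu_one : uu 1 = 0 := by
  unfold uu rho sG snum sden snf sgr
  norm_num

lemma uu_pos {x : ℝ} (hx1 : 1 < x) (hxth : x < th) : 0 < uu x := by
  have h := uu_strictMono (Set.mem_Ico.2 ⟨le_refl 1, one_lt_th⟩)
    (Set.mem_Ico.2 ⟨hx1.le, hxth⟩) hx1
  rwa [uu_one] at h

lemma sG_eq_pow {x : ℝ} (hx1 : 1 ≤ x) (hxth : x < th) {n : ℕ}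
    (hr : x ^ n * sfr x + sgr x = 0) : sG x = x ^ n := by
  have hnf : snf x ≠ 0 := (snf_pos hx1 hxth).ne'
  unfold sG
  rw [div_eq_iff hnf]
  unfold sfr sgr at hr
  unfold sgr snf
  linear_combination hr

lemma no_two_rootsN (n : ℕ) {x y : ℝ} (hx : 1 < x) (hy : y < th) (hxy : x < y)
    (hrx : x ^ n * sfr x + sgr x = 0) (hry : y ^ n * sfr y + sgr y = 0) : False := by
  have hxth : x < th := hxy.trans hy
  have hy1 : 1 < y := hx.trans hxy
  have hGx := sG_eq_pow hx.le hxth hrx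
  have hGy := sG_eq_pow hy1.le hy hry
  have hlogx : Real.log (sG x) = (n : ℝ) * Real.log x := by rw [hGx, Real.log_pow]
  have hlogy : Real.log (sG y) = (n : ℝ) * Real.log y := by rw [hGy, Real.log_pow]
  -- rho x > n
  have hrhox : (n : ℝ) < rho x := by
    have hu := uu_pos hx hxth
    unfold uu at hu
    rw [hlogx] at hu
    have hlx := Real.log_pos hx
    nlinarith
  -- Rolle / MVT
  set F : ℝ → ℝ := fun t => Real.log (sG t) - (n : ℝ) * Real.log t with hF
  have hFd : ∀ t ∈ Set.Icc x y, HasDerivAt F (rho t / t - (n : ℝ) / t) t := by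
    intro t ht
    have ht1 : 1 ≤ t := le_trans hx.le ht.1
    have htth : t < th := lt_of_le_of_lt ht.2 hy
    have ht0 : t ≠ 0 := by positivity
    have h2 : HasDerivAt (fun s : ℝ => (n : ℝ) * Real.log s) ((n : ℝ) * t⁻¹) t :=
      (Real.hasDerivAt_log ht0).const_mul _
    have h := (hasDerivAt_log_sG ht1 htth).sub h2
    exact h.congr_deriv (by ring)
  obtain ⟨ξ, hξ, hslope⟩ := exists_hasDerivAt_eq_slope F (fun t => rho t / t - (n : ℝ) / t)
    hxy (fun t ht => (hFd t ht).continuousAt.continuousWithinAt)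
    (fun t ht => hFd t (Set.Ioo_subset_Icc_self ht))
  have hFx : F x = 0 := by simp only [hF]; rw [hlogx]; ring
  have hFy : F y = 0 := by simp only [hF]; rw [hlogy]; ring
  rw [hFx, hFy] at hslope
  have hξ0 : (0 : ℝ) < ξ := lt_trans (lt_trans one_pos hx) hξ.1
  have hrhoξ : rho ξ = (n : ℝ) := by
    have h0 : rho ξ / ξ - (n : ℝ) / ξ = 0 := by rw [hslope]; ring
    field_simp at h0
    linarith
  have hmono : rho x < rho ξ := rho_strictMono (Set.mem_Ico.2 ⟨hx.le, hxth⟩)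
    (Set.mem_Ico.2 ⟨(hx.trans hξ.1).le, hξ.2.trans hy⟩) hξ.1
  linarith

end SalemCalc

noncomputable section SalemRoots

lemma contN (n : ℕ) : Continuous (fun x : ℝ => x ^ n * sfr x + sgr x) := by
  unfold sfr sgr; fun_prop

lemma contQ (m : ℕ) : Continuous (fun x : ℝ => x ^ m * sfr x - sgr x) := by
  unfold sfr sgr; fun_prop

lemma exN {n : ℕ} (hn : 8 ≤ n) : ∃ x ∈ Set.Ioo (1.1 : ℝ) th, x ^ n * sfr x + sgr x = 0 := by
  have h11 : (1.1 : ℝ) ^ n * sfr 1.1 + sgr 1.1 < 0 := by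
    have hp : (1.1 : ℝ) ^ 8 ≤ 1.1 ^ n := pow_le_pow_right₀ (by norm_num) hn
    have hs : sfr 1.1 = -(0.769 : ℝ) := by unfold sfr; norm_num
    have hg : sgr 1.1 = (1.541 : ℝ) := by unfold sgr; norm_num
    rw [hs, hg]; nlinarith
  have hth : (0 : ℝ) < th ^ n * sfr th + sgr th := by
    rw [sfr_th]; simpa using sgr_pos one_lt_th.le
  have hsub := intermediate_value_Ioo (a := (1.1 : ℝ)) (b := th)
    (by linarith [th_gt]) (contN n).continuousOn
  have h0 : (0 : ℝ) ∈ Set.Ioo ((1.1 : ℝ) ^ n * sfr 1.1 + sgr 1.1) (th ^ n * sfr th + sgr th) :=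
    ⟨h11, hth⟩
  obtain ⟨x, hx, hx0⟩ := hsub h0
  exact ⟨x, hx, hx0⟩

lemma exQ {m : ℕ} (hm : 1 ≤ m) : ∃ x ∈ Set.Ioo th (2.2 : ℝ), x ^ m * sfr x - sgr x = 0 := by
  have hth : th ^ m * sfr th - sgr th < 0 := by
    rw [sfr_th]; simpa using sgr_pos one_lt_th.le
  have h22 : (0 : ℝ) < (2.2 : ℝ) ^ m * sfr 2.2 - sgr 2.2 := by
    have hp : (2.2 : ℝ) ^ 1 ≤ 2.2 ^ m := pow_le_pow_right₀ (by norm_num) hm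
    have hs : sfr 2.2 = (7.448 : ℝ) := by unfold sfr; norm_num
    have hg : sgr 2.2 = (14.488 : ℝ) := by unfold sgr; norm_num
    rw [hs, hg]; nlinarith
  have hsub := intermediate_value_Ioo (a := th) (b := (2.2 : ℝ))
    (by linarith [th_lt]) (contQ m).continuousOn
  obtain ⟨x, hx, hx0⟩ := hsub ⟨hth, h22⟩
  exact ⟨x, hx, hx0⟩

lemma no_two_rootsQ (m : ℕ) (hm : 1 ≤ m) {x y : ℝ} (hx : th < x) (hxy : x < y)
    (hrx : x ^ m * sfr x - sgr x = 0) (hry : y ^ m * sfr y - sgr y = 0) : False := by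
  have hx1 : 1 < x := one_lt_th.trans hx
  have hx0 : (0 : ℝ) < x := lt_trans one_pos hx1
  have hy0 : (0 : ℝ) < y := lt_trans hx0 hxy
  have hfx := sfr_pos hx
  have hfy := sfr_pos (hx.trans hxy)
  have hkey : 0 < sgr x * sfr y - sgr y * sfr x := by
    have he : sgr x * sfr y - sgr y * sfr x =
        (y - x) * (1 + x + y + x * y + x ^ 2 * y + x * y ^ 2 + x ^ 2 * y ^ 2) := by
      unfold sfr sgr; ring
    rw [he]
    exact mul_pos (sub_pos.2 hxy) (by positivity)
  have hplt : x ^ m < y ^ m := pow_lt_pow_left₀ hxy hx0.le (by omega)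
  have h1 : x ^ m * (sfr x * sfr y) < y ^ m * (sfr x * sfr y) :=
    mul_lt_mul_of_pos_right hplt (mul_pos hfx hfy)
  nlinarith [hkey, h1, hrx, hry]

lemma rootN_spec (n : ℕ) (hn : 8 ≤ n) :
    ∃ x : ℝ, 1 < x ∧ x < th ∧ x ^ n * sfr x + sgr x = 0 ∧
      ∀ y : ℝ, 1 < y → y ^ n * sfr y + sgr y = 0 → y = x := by
  obtain ⟨x, hx, hroot⟩ := exN hn
  have hx1 : 1 < x := lt_trans (by norm_num) hx.1
  refine ⟨x, hx1, hx.2, hroot, ?_⟩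
  intro y hy hry
  have hyth : y < th := by
    by_contra h
    push_neg at h
    rcases eq_or_lt_of_le h with h' | h'
    · subst h'
      rw [sfr_th] at hry
      have := sgr_pos one_lt_th.le
      simp at hry; linarith
    · have h1 := sfr_pos h'
      have h2 := sgr_pos hy.le
      nlinarith [pow_pos (lt_trans one_pos hy) n]
  rcases lt_trichotomy y x with h | h | h
  · exact ((no_two_rootsN n hy hx.2 h hry hroot)).elim
  · exact h
  · exact ((no_two_rootsN n hx1 hyth h hroot hry)).elim

lemma rootQ_spec (m : ℕ) (hm : 1 ≤ m) :
    ∃ x : ℝ, th < x ∧ x < 2.2 ∧ x ^ m * sfr x - sgr x = 0 ∧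
      ∀ y : ℝ, 1 < y → y ^ m * sfr y - sgr y = 0 → y = x := by
  obtain ⟨x, hx, hroot⟩ := exQ hm
  refine ⟨x, hx.1, hx.2, hroot, ?_⟩
  intro y hy hry
  have hyth : th < y := by
    by_contra h
    push_neg at h
    rcases eq_or_lt_of_le h with h' | h'
    · subst h'
      rw [sfr_th] at hry
      have := sgr_pos one_lt_th.le
      simp at hry; linarith
    · have h1 := sfr_neg hy.le h'
      have h2 := sgr_pos hy.le
      nlinarith [pow_pos (lt_trans one_pos hy) m]
  rcases lt_trichotomy y x with h | h | h
  · exact ((no_two_rootsQ m hm hyth h hry hroot)).elim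
  · exact h
  · exact ((no_two_rootsQ m hm hx.1 h hroot hry)).elim

end SalemRoots

noncomputable section SalemSeq

def sNfun (k : ℕ) : ℝ :=
  if h : 10 ≤ k then (rootN_spec (k - 2) (by omega)).choose else 0

def sQfun (k : ℕ) : ℝ :=
  if h : 4 ≤ k then (rootQ_spec (k - 3) (by omega)).choose else 0

def sN (n : ℕ) : ℝ := sNfun (max n 10)

def sQ (m : ℕ) : ℝ := sQfun (max m 4)

lemma sNfun_spec {k : ℕ} (h : 10 ≤ k) :
    1 < sNfun k ∧ sNfun k < th ∧ (sNfun k) ^ (k - 2) * sfr (sNfun k) + sgr (sNfun k) = 0 ∧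
      ∀ y : ℝ, 1 < y → y ^ (k - 2) * sfr y + sgr y = 0 → y = sNfun k := by
  rw [sNfun, dif_pos h]
  exact (rootN_spec (k - 2) (by omega)).choose_spec

lemma sQfun_spec {k : ℕ} (h : 4 ≤ k) :
    th < sQfun k ∧ sQfun k < 2.2 ∧ (sQfun k) ^ (k - 3) * sfr (sQfun k) - sgr (sQfun k) = 0 ∧
      ∀ y : ℝ, 1 < y → y ^ (k - 3) * sfr y - sgr y = 0 → y = sQfun k := by
  rw [sQfun, dif_pos h]
  exact (rootQ_spec (k - 3) (by omega)).choose_spec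

lemma sNfun_lt {a b : ℕ} (ha : 10 ≤ a) (hab : a < b) : sNfun a < sNfun b := by
  obtain ⟨hx1, hxth, hxr, _⟩ := sNfun_spec ha
  obtain ⟨-, -, -, huniq⟩ := sNfun_spec (le_trans ha hab.le)
  set x := sNfun a
  have hfx : sfr x < 0 := sfr_neg hx1.le hxth
  have hpow : x ^ (a - 2) < x ^ (b - 2) := pow_lt_pow_right₀ hx1 (by omega)
  have hneg : x ^ (b - 2) * sfr x + sgr x < 0 := by
    have := mul_lt_mul_of_neg_right hpow hfx
    linarith
  have hth : (0 : ℝ) < th ^ (b - 2) * sfr th + sgr th := by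
    rw [sfr_th]; simpa using sgr_pos one_lt_th.le
  have hsub := intermediate_value_Ioo (a := x) (b := th) hxth.le (contN (b - 2)).continuousOn
  obtain ⟨y, hy, hy0⟩ := hsub ⟨hneg, hth⟩
  have := huniq y (hx1.trans hy.1) hy0
  rw [← this]
  exact hy.1

lemma sQfun_lt {a b : ℕ} (ha : 4 ≤ a) (hab : a < b) : sQfun b < sQfun a := by
  obtain ⟨hxth, hx22, hxr, _⟩ := sQfun_spec ha
  obtain ⟨-, -, -, huniq⟩ := sQfun_spec (le_trans ha hab.le)
  set x := sQfun a
  have hx1 : 1 < x := one_lt_th.trans hxth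
  have hfx : 0 < sfr x := sfr_pos hxth
  have hpow : x ^ (a - 3) < x ^ (b - 3) := pow_lt_pow_right₀ hx1 (by omega)
  have hposx : 0 < x ^ (b - 3) * sfr x - sgr x := by
    have := mul_lt_mul_of_pos_right hpow hfx
    linarith
  have hth : th ^ (b - 3) * sfr th - sgr th < 0 := by
    rw [sfr_th]; simpa using sgr_pos one_lt_th.le
  have hsub := intermediate_value_Ioo (a := th) (b := x) hxth.le (contQ (b - 3)).continuousOn
  obtain ⟨y, hy, hy0⟩ := hsub ⟨hth, hposx⟩
  have := huniq y (one_lt_th.trans hy.1) hy0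
  rw [← this]
  exact hy.2

lemma sN_eq {n : ℕ} (hn : 10 ≤ n) : sN n = sNfun n := by
  rw [sN, max_eq_left hn]

lemma sQ_eq {m : ℕ} (hm : 4 ≤ m) : sQ m = sQfun m := by
  rw [sQ, max_eq_left hm]

lemma sN_mono : Monotone sN := by
  intro a b hab
  have h : max a 10 ≤ max b 10 := max_le_max hab le_rfl
  rcases eq_or_lt_of_le h with h' | h'
  · rw [sN, sN, h']
  · exact (sNfun_lt (le_max_right a 10) h').le

lemma sQ_anti : Antitone sQ := by
  intro a b hab
  have h : max a 4 ≤ max b 4 := max_le_max hab le_rfl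
  rcases eq_or_lt_of_le h with h' | h'
  · rw [sQ, sQ, h']
  · exact (sQfun_lt (le_max_right a 4) h').le

lemma sN_lt_th (n : ℕ) : sN n < th := (sNfun_spec (le_max_right n 10)).2.1

lemma one_lt_sN (n : ℕ) : 1 < sN n := (sNfun_spec (le_max_right n 10)).1

lemma th_lt_sQ (m : ℕ) : th < sQ m := (sQfun_spec (le_max_right m 4)).1

lemma sN_tendsto : Filter.Tendsto sN Filter.atTop (nhds th) := by
  have hbdd : BddAbove (Set.range sN) := ⟨th, by rintro _ ⟨n, rfl⟩; exact (sN_lt_th n).le⟩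
  have htend := tendsto_atTop_ciSup sN_mono hbdd
  have hLth : (⨆ n, sN n) = th := by
    have hLle : (⨆ n, sN n) ≤ th := ciSup_le fun n => (sN_lt_th n).le
    rcases eq_or_lt_of_le hLle with h | h
    · exact h
    · exfalso
      set L := ⨆ n, sN n with hL
      set z := (L + th) / 2 with hz
      have h1L : 1 < L := lt_of_lt_of_le (one_lt_sN 0) (le_ciSup hbdd 0)
      have hz1 : 1 < z := by rw [hz]; linarith
      have hzth : z < th := by rw [hz]; linarith
      have hfz : sfr z < 0 := sfr_neg hz1.le hzth
      obtain ⟨N, hN⟩ := pow_unbounded_of_one_lt (sgr z / (-sfr z)) hz1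
      obtain ⟨hx1, hxth, hxr, huniq⟩ := sNfun_spec (show 10 ≤ N + 10 by omega)
      have hxL : sNfun (N + 10) ≤ L := by
        have := le_ciSup hbdd (N + 10)
        rwa [sN_eq (show 10 ≤ N + 10 by omega)] at this
      have hxz : sNfun (N + 10) < z := lt_of_le_of_lt hxL (by rw [hz]; linarith)
      have key : 0 < z ^ (N + 10 - 2) * sfr z + sgr z := by
        by_contra hle
        push_neg at hle
        rcases eq_or_lt_of_le hle with h' | h'
        · have := huniq z hz1 h'
          rw [← this] at hxz; linarith
        · have hth2 : (0 : ℝ) < th ^ (N + 10 - 2) * sfr th + sgr th := by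
            rw [sfr_th]; simpa using sgr_pos one_lt_th.le
          have hsub := intermediate_value_Ioo (a := z) (b := th) hzth.le
            (contN (N + 10 - 2)).continuousOn
          obtain ⟨y, hy, hy0⟩ := hsub ⟨h', hth2⟩
          have hyx := huniq y (hz1.trans hy.1) hy0
          rw [← hyx] at hxz
          linarith [hy.1]
      have hb1 : z ^ (N + 10 - 2) < sgr z / (-sfr z) := by
        rw [lt_div_iff₀ (by linarith)]
        nlinarith
      have hb2 : z ^ N ≤ z ^ (N + 10 - 2) := pow_le_pow_right₀ hz1.le (by omega)
      linarith
  rwa [hLth] at htend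

lemma sQ_tendsto : Filter.Tendsto sQ Filter.atTop (nhds th) := by
  have hbdd : BddBelow (Set.range sQ) := ⟨th, by rintro _ ⟨m, rfl⟩; exact (th_lt_sQ m).le⟩
  have htend := tendsto_atTop_ciInf sQ_anti hbdd
  have hLth : (⨅ m, sQ m) = th := by
    have hLge : th ≤ ⨅ m, sQ m := le_ciInf fun m => (th_lt_sQ m).le
    rcases eq_or_lt_of_le hLge with h | h
    · exact h.symm
    · exfalso
      set L := ⨅ m, sQ m with hL
      set z := (th + L) / 2 with hz
      have hthz : th < z := by rw [hz]; linarith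
      have hz1 : 1 < z := one_lt_th.trans hthz
      have hzL : z < L := by rw [hz]; linarith
      have hfz : 0 < sfr z := sfr_pos hthz
      obtain ⟨M, hM⟩ := pow_unbounded_of_one_lt (sgr z / sfr z) hz1
      obtain ⟨hxth, hx22, hxr, huniq⟩ := sQfun_spec (show 4 ≤ M + 4 by omega)
      have hxL : L ≤ sQfun (M + 4) := by
        have := ciInf_le hbdd (M + 4)
        rwa [sQ_eq (show 4 ≤ M + 4 by omega)] at this
      have hzx : z < sQfun (M + 4) := lt_of_lt_of_le hzL hxL
      have key : z ^ (M + 4 - 3) * sfr z - sgr z < 0 := by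
        by_contra hle
        push_neg at hle
        rcases eq_or_lt_of_le hle with h' | h'
        · have := huniq z hz1 h'.symm
          rw [← this] at hzx; linarith
        · have hth2 : th ^ (M + 4 - 3) * sfr th - sgr th < 0 := by
            rw [sfr_th]; simpa using sgr_pos one_lt_th.le
          have hsub := intermediate_value_Ioo (a := th) (b := z) hthz.le
            (contQ (M + 4 - 3)).continuousOn
          obtain ⟨y, hy, hy0⟩ := hsub ⟨hth2, h'⟩
          have hyx := huniq y (one_lt_th.trans hy.1) hy0
          rw [← hyx] at hzx
          linarith [hy.2]
      have hb1 : z ^ (M + 4 - 3) < sgr z / sfr z := by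
        rw [lt_div_iff₀ hfz]
        nlinarith
      have hb2 : z ^ M ≤ z ^ (M + 4 - 3) := pow_le_pow_right₀ hz1.le (by omega)
      linarith
  rwa [hLth] at htend

end SalemSeq

lemma aeval_Nn (x : ℝ) (n : ℕ) : aeval x (Nn n) = x ^ (n - 2) * sfr x + sgr x := by
  unfold sfr sgr
  simp [Nn]

lemma aeval_Qm (x : ℝ) (m : ℕ) : aeval x (Qm m) = x ^ (m - 3) * sfr x - sgr x := by
  unfold sfr sgr
  simp [Qm]

/-- For `n ≥ 10` the polynomial `N_n` has a unique real root `s n > 1`; for `m ≥ 4` the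
polynomial `Q_m` has a unique real root `s' m > 1`. The sequence `s` is strictly increasing,
the sequence `s'` is strictly decreasing, and both converge to the unique real root `θ` of
`X ^ 3 - X - 1` (the smallest Pisot number). -/
theorem salem_sequences_monotone_tendsto_pisot :
    ∃ θ : ℝ, θ ^ 3 - θ - 1 = 0 ∧ (∀ x : ℝ, x ^ 3 - x - 1 = 0 → x = θ) ∧
    ∃ s s' : ℕ → ℝ,
      (∀ n : ℕ, 10 ≤ n → 1 < s n ∧ aeval (s n) (Nn n) = 0 ∧
        ∀ x : ℝ, 1 < x → aeval x (Nn n) = 0 → x = s n) ∧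
      (∀ m : ℕ, 4 ≤ m → 1 < s' m ∧ aeval (s' m) (Qm m) = 0 ∧
        ∀ x : ℝ, 1 < x → aeval x (Qm m) = 0 → x = s' m) ∧
      (∀ n n' : ℕ, 10 ≤ n → n < n' → s n < s n') ∧
      (∀ m m' : ℕ, 4 ≤ m → m < m' → s' m' < s' m) ∧
      Tendsto s atTop (nhds θ) ∧ Tendsto s' atTop (nhds θ) := by
  refine ⟨th, sfr_th, fun x hx => th_unique x hx, sN, sQ, ?_, ?_, ?_, ?_,
    sN_tendsto, sQ_tendsto⟩
  · intro n hn
    obtain ⟨h1, h2, h3, h4⟩ := sNfun_spec hn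
    rw [sN_eq hn]
    refine ⟨h1, by rw [aeval_Nn]; exact h3, fun x hx hx0 => h4 x hx (by rwa [aeval_Nn] at hx0)⟩
  · intro m hm
    obtain ⟨h1, h2, h3, h4⟩ := sQfun_spec hm
    rw [sQ_eq hm]
    refine ⟨one_lt_th.trans h1, by rw [aeval_Qm]; exact h3,
      fun x hx hx0 => h4 x hx (by rwa [aeval_Qm] at hx0)⟩
  · intro n n' hn hlt
    rw [sN_eq hn, sN_eq (by omega)]
    exact sNfun_lt hn hlt
  · intro m m' hm hlt
    rw [sQ_eq hm, sQ_eq (by omega)]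
    exact sQfun_lt hm hlt
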